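/- Let M be a non-trivial connected matroid on ground set E and f ∈ E. Then M is parallel irreducible at f if and only if the contraction M/f is connected. -/

import Mathlib

open Polynomial

namespace SPPaper

noncomputable section
open Classical

universe u
variable {α : Type u} {V : Type u}

/-- Deletion of a set of elements: `M − X`. -/
def del (M : Matroid α) (X : Set α) : Matroid α := M.restrict (M.E \ X)

/-- Contraction of a set of elements: `M/X = (M✶ − X)✶`. -/
def con (M : Matroid α) (X : Set α) : Matroid α := (del M.dual X).dual

/-- The rank of a set: the (common) cardinality of maximal independent subsets. -/
def rk (M : Matroid α) (X : Set α) : ℕ :=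
  sSup {n | ∃ I, I ⊆ X ∧ M.Indep I ∧ I.ncard = n}

/-- The rank of a matroid. -/
def rank (M : Matroid α) : ℕ := rk M M.E

/-- `e` is a loop of `M` if `{e}` is dependent. -/
def IsLoop (M : Matroid α) (e : α) : Prop := e ∈ M.E ∧ ¬ M.Indep {e}

/-- A matroid is loopless if it has no loops. -/
def Loopless (M : Matroid α) : Prop := ∀ e, ¬ IsLoop M e

/-- `e` is a coloop of `M` if it lies in every basis. -/
def IsColoop (M : Matroid α) (e : α) : Prop := e ∈ M.E ∧ ∀ B, M.IsBase B → e ∈ B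

/-- A circuit of a matroid: a minimal dependent set. -/
def IsCircuit (M : Matroid α) (C : Set α) : Prop := M.Dep C ∧ ∀ D, D ⊂ C → M.Indep D

/-- A matroid is simple if it has no loops and no two-element circuits. -/
def Simple (M : Matroid α) : Prop := Loopless M ∧ ∀ e f : α, ¬ IsCircuit M {e, f}

/-- `h(M;x) = t(M;x,0)` where `t` is the Tutte polynomial:
`t(M;x,y) = ∑_{A ⊆ E} (x−1)^(r(E)−r(A)) (y−1)^(|A|−r(A))`. -/
def hPoly (M : Matroid α) [Fintype α] : Polynomial ℤ :=
  ∑ A ∈ (Set.toFinite M.E).toFinset.powerset,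
    (Polynomial.X - 1) ^ (rank M - rk M (A : Set α)) *
      (-1 : Polynomial ℤ) ^ (A.card - rk M (A : Set α))

/-- The `i`-th entry of the h-vector of the broken circuit complex:
`h(M;x) = ∑_{i=0}^r h_i x^(r−i)`. -/
def hvec (M : Matroid α) [Fintype α] (i : ℕ) : ℤ :=
  if i ≤ rank M then (hPoly M).coeff (rank M - i) else 0

/-- The beta invariant `β(M) = (−1)^(r(E)) ∑_{A ⊆ E} (−1)^(|A|) r(A)`. -/
def beta (M : Matroid α) [Fintype α] : ℤ :=
  (-1) ^ rank M *
    ∑ A ∈ (Set.toFinite M.E).toFinset.powerset, (-1 : ℤ) ^ A.card * (rk M (A : Set α) : ℤ)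

/-- `P` is the direct sum of `M1` and `M2`. -/
def IsDirSumOf (P M1 M2 : Matroid α) : Prop :=
  ∃ h : Disjoint M1.E M2.E, P = Matroid.disjointSum M1 M2 h

/-- A matroid is connected if its ground set is nonempty and it is not the direct sum
of two matroids on nonempty ground sets. -/
def Connected (M : Matroid α) : Prop :=
  M.E.Nonempty ∧ ¬ ∃ M1 M2 : Matroid α, M1.E.Nonempty ∧ M2.E.Nonempty ∧ IsDirSumOf M M1 M2

/-- `M` is the matroid on ground set `E` whose circuits are exactly the sets satisfying `𝒞`. -/
def HasCircuits (M : Matroid α) (E : Set α) (𝒞 : Set α → Prop) : Prop :=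
  M.E = E ∧ ∀ C, IsCircuit M C ↔ 𝒞 C

/-- The circuits of the parallel connection of `M1` and `M2` with basepoint `e`. -/
def PConnCircuit (M1 M2 : Matroid α) (e : α) (C : Set α) : Prop :=
  IsCircuit M1 C ∨ IsCircuit M2 C ∨
    ∃ C1 C2, IsCircuit M1 C1 ∧ IsCircuit M2 C2 ∧ e ∈ C1 ∧ e ∈ C2 ∧ C = (C1 ∪ C2) \ {e}

/-- The circuits of the series connection of `M1` and `M2` with basepoint `e`. -/
def SConnCircuit (M1 M2 : Matroid α) (e : α) (C : Set α) : Prop :=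
  IsCircuit (del M1 {e}) C ∨ IsCircuit (del M2 {e}) C ∨
    ∃ C1 C2, IsCircuit M1 C1 ∧ IsCircuit M2 C2 ∧ e ∈ C1 ∧ e ∈ C2 ∧ C = C1 ∪ C2

/-- `P` is the parallel connection of `M1` and `M2` with respect to the basepoint `e`
(including the degenerate conventions when `e` is a loop or a coloop). -/
def IsParallelConn (P M1 M2 : Matroid α) (e : α) : Prop :=
  if IsLoop M1 e then IsDirSumOf P M1 (con M2 {e})
  else if IsColoop M1 e then IsDirSumOf P (del M1 {e}) M2
  else if IsLoop M2 e then IsDirSumOf P (con M1 {e}) M2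
  else if IsColoop M2 e then IsDirSumOf P M1 (del M2 {e})
  else HasCircuits P (M1.E ∪ M2.E) (PConnCircuit M1 M2 e)

/-- `S` is the series connection of `M1` and `M2` with respect to the basepoint `e`
(including the degenerate conventions when `e` is a loop or a coloop). -/
def IsSeriesConn (S M1 M2 : Matroid α) (e : α) : Prop :=
  if IsLoop M1 e then IsDirSumOf S (con M1 {e}) M2
  else if IsColoop M1 e then IsDirSumOf S M1 (del M2 {e})
  else if IsLoop M2 e then IsDirSumOf S M1 (con M2 {e})
  else if IsColoop M2 e then IsDirSumOf S (del M1 {e}) M2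
  else HasCircuits S (M1.E ∪ M2.E) (SConnCircuit M1 M2 e)

/-- `N` is a two-element circuit. -/
def TwoCircuit (N : Matroid α) : Prop :=
  ∃ e f : α, e ≠ f ∧ N.E = {e, f} ∧ IsCircuit N N.E

/-- `M` is a series extension of `N`: `M = S(N, C₂)` for a 2-circuit `C₂`. -/
def IsSeriesExtOf (M N : Matroid α) : Prop :=
  ∃ (C : Matroid α) (e : α), TwoCircuit C ∧ N.E ∩ C.E = {e} ∧ IsSeriesConn M N C e

/-- `M` is a parallel extension of `N`: `M = P(N, C₂)` for a 2-circuit `C₂`. -/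
def IsParallelExtOf (M N : Matroid α) : Prop :=
  ∃ (C : Matroid α) (e : α), TwoCircuit C ∧ N.E ∩ C.E = {e} ∧ IsParallelConn M N C e

/-- A series-parallel network: a matroid obtainable from a coloop by a sequence of
series and parallel extensions. -/
inductive IsSPNetwork : Matroid α → Prop
  | coloop (M : Matroid α) (e : α) : M.E = {e} → IsColoop M e → IsSPNetwork M
  | series (M N : Matroid α) : IsSPNetwork N → IsSeriesExtOf M N → IsSPNetwork M
  | parallel (M N : Matroid α) : IsSPNetwork N → IsParallelExtOf M N → IsSPNetwork M

/-- `M` is parallel irreducible at `f`: either `M` is trivial or `M` is not the parallel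
connection, with basepoint `f`, of two matroids each having at least two elements. -/
def ParallelIrreducibleAt (M : Matroid α) (f : α) : Prop :=
  M.E.Subsingleton ∨
    ¬ ∃ M1 M2 : Matroid α, M1.E ∩ M2.E = {f} ∧ M1.E.Nontrivial ∧ M2.E.Nontrivial ∧
        IsParallelConn M M1 M2 f

/-- `M` is parallel irreducible. -/
def ParallelIrreducible (M : Matroid α) : Prop := ∀ f ∈ M.E, ParallelIrreducibleAt M f

/-- `M` is the iterated parallel connection of the list `l` of matroids. -/
inductive IsIterPConn : Matroid α → List (Matroid α) → Prop
  | base (M : Matroid α) : IsIterPConn M [M]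
  | step (P M N : Matroid α) (l : List (Matroid α)) (e : α) :
      IsIterPConn P l → P.E ∩ N.E = {e} → IsParallelConn M P N e →
      IsIterPConn M (l ++ [N])

/-- `M` is the cycle matroid of the graph `G` (on the ground set `G.edgeSet`):
a set of edges is independent iff it contains no cycle. -/
def IsCycleMatroid (M : Matroid (Sym2 V)) (G : SimpleGraph V) : Prop :=
  M.E = G.edgeSet ∧ ∀ X ⊆ M.E, (M.Indep X ↔ (SimpleGraph.fromEdgeSet X).IsAcyclic)

/-- `M` is (isomorphic to) the cycle matroid of the graph `G`. -/
def IsCycleMatroidOf (M : Matroid α) {W : Type} (G : SimpleGraph W) : Prop :=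
  ∃ φ : α → Sym2 W, Set.InjOn φ M.E ∧ φ '' M.E = G.edgeSet ∧
    ∀ X ⊆ M.E, (M.Indep X ↔ (SimpleGraph.fromEdgeSet (φ '' X)).IsAcyclic)

/-- A matroid is graphic if it is isomorphic to the cycle matroid of a graph. -/
def IsGraphic (M : Matroid α) : Prop := ∃ (W : Type) (G : SimpleGraph W), IsCycleMatroidOf M G

/-- A nonempty set of elements, each lying in some circuit, such that every circuit of `M`
containing one of them contains all of them. -/
def SeriesSet (M : Matroid α) (X : Set α) : Prop :=
  X ⊆ M.E ∧ X.Nonempty ∧ (∀ e ∈ X, ∃ C, IsCircuit M C ∧ e ∈ C) ∧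
    ∀ C, IsCircuit M C → X ⊆ C ∨ Disjoint X C

/-- A series class: a maximal `SeriesSet`. -/
def SeriesClass (M : Matroid α) (X : Set α) : Prop :=
  SeriesSet M X ∧ ∀ Y, SeriesSet M Y → X ⊆ Y → X = Y

/-- A removable line of a block `G` (with cycle matroid `M`): a line (a nontrivial path
all of whose internal vertices have degree 2) whose removal (edges together with the
internal vertices) leaves a block. -/
def IsRemovableLine (G : SimpleGraph V) (M : Matroid (Sym2 V)) (X : Set (Sym2 V)) : Prop :=
  ∃ (u v : V) (p : G.Walk u v), p.IsPath ∧ 0 < p.length ∧ X = {e | e ∈ p.edges} ∧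
    (∀ w ∈ p.support, w ≠ u → w ≠ v → (G.neighborSet w).ncard = 2) ∧
    ((G.deleteEdges X).induce {w : V | ¬ (w ∈ p.support ∧ w ≠ u ∧ w ≠ v)}).Connected ∧
    Connected (del M X)

/-- One subdivision step: replace an edge `uv` by a path `u-w-v` through a new vertex `w`. -/
def SubdivStep (G G' : SimpleGraph V) : Prop :=
  ∃ u v w : V, G.Adj u v ∧ w ∉ G.support ∧ w ≠ u ∧ w ≠ v ∧
    G' = SimpleGraph.fromEdgeSet ((G.edgeSet \ {s(u, v)}) ∪ {s(u, w), s(w, v)})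

/-- `H` is a subdivision of the complete graph `K₄`. -/
def IsSubdivOfK4 (H : SimpleGraph V) : Prop :=
  ∃ f : Fin 4 ↪ V,
    Relation.ReflTransGen SubdivStep
      (SimpleGraph.fromEdgeSet {s | ∃ i j : Fin 4, i ≠ j ∧ s = s(f i, f j)}) H


/-! ### Auxiliary lemmas for stmt8 -/

section Stmt8Aux

open Set Matroid

variable {M : Matroid α} {C D I X : Set α} {e f : α}

private lemma IsCircuit.dep' (h : IsCircuit M C) : M.Dep C := h.1

private lemma IsCircuit.subset_ground' (h : IsCircuit M C) : C ⊆ M.E := h.1.subset_ground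

/-- Existence of a circuit through `e` inside `insert e I`. -/
private lemma exists_circuit_insert (hI : M.Indep I) (hecl : e ∈ M.closure I) (heI : e ∉ I) :
    ∃ C, IsCircuit M C ∧ e ∈ C ∧ C ⊆ insert e I := by
  classical
  set Js : Set (Set α) := {J | J ⊆ I ∧ e ∈ M.closure J} with hJs_def
  have hIJs : I ∈ Js := ⟨Subset.rfl, hecl⟩
  have hne : Js.Nonempty := ⟨I, hIJs⟩
  have hJs : ∀ J ∈ Js, J ⊆ I := fun J hJ => hJ.1
  set J0 := ⋂₀ Js with hJ0_def
  have hJ0I : J0 ⊆ I := sInter_subset_of_mem hIJs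
  have hJ0 : M.Indep J0 := hI.subset hJ0I
  have heJ0cl : e ∈ M.closure J0 := by
    rw [hJ0_def, hI.closure_sInter_eq_biInter_closure_of_forall_subset hne hJs, mem_iInter₂]
    exact fun J hJ => hJ.2
  have heJ0 : e ∉ J0 := fun h => heI (hJ0I h)
  have hdep : M.Dep (insert e J0) := hJ0.insert_dep_iff.2 ⟨heJ0cl, heJ0⟩
  refine ⟨insert e J0, ⟨hdep, ?_⟩, mem_insert _ _, insert_subset_insert hJ0I⟩
  intro D hD
  by_cases heD : e ∈ D
  · have hDJ : D \ {e} ⊆ J0 := by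
      intro x hx
      rcases hD.subset hx.1 with h | h
      · exact absurd h hx.2
      · exact h
    by_contra hnind
    have hDE : D ⊆ M.E := hD.subset.trans hdep.subset_ground
    have hind : M.Indep (D \ {e}) := hJ0.subset hDJ
    have hdepD : M.Dep (insert e (D \ {e})) := by
      rw [insert_diff_singleton, insert_eq_of_mem heD]
      exact dep_of_not_indep hnind hDE
    have hecl' : e ∈ M.closure (D \ {e}) := (hind.insert_dep_iff.1 hdepD).1
    have hmem : D \ {e} ∈ Js := ⟨hDJ.trans hJ0I, hecl'⟩
    have hsub : J0 ⊆ D \ {e} := sInter_subset_of_mem hmem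
    exact hD.2 (insert_subset heD (hsub.trans diff_subset))
  · refine hJ0.subset fun x hx => ?_
    rcases hD.subset hx with h | h
    · exact absurd (h ▸ hx) heD
    · exact h

/-- Every dependent set contains a circuit. -/
private lemma exists_circuit_of_dep (hD : M.Dep D) : ∃ C, IsCircuit M C ∧ C ⊆ D := by
  obtain ⟨I, hI⟩ := M.exists_isBasis D hD.subset_ground
  have hne : ∃ e, e ∈ D ∧ e ∉ I := by
    by_contra h
    push_neg at h
    have : D ⊆ I := fun x hx => h x hx
    exact hD.not_indep (hI.indep.subset (hI.subset.antisymm this ▸ Subset.rfl))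
  obtain ⟨e, heD, heI⟩ := hne
  have hecl : e ∈ M.closure I := hI.subset_closure heD
  obtain ⟨C, hC, -, hCsub⟩ := exists_circuit_insert hI.indep hecl heI
  exact ⟨C, hC, hCsub.trans (insert_subset heD hI.subset)⟩

private lemma indep_of_forall_circuit (hIE : I ⊆ M.E)
    (h : ∀ C, IsCircuit M C → ¬ C ⊆ I) : M.Indep I := by
  by_contra hind
  obtain ⟨C, hC, hCI⟩ := exists_circuit_of_dep (dep_of_not_indep hind hIE)
  exact h C hC hCI

private lemma IsCircuit.eq_of_subset_circuit {C₁ C₂ : Set α} (h₁ : IsCircuit M C₁)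
    (h₂ : IsCircuit M C₂) (hsub : C₁ ⊆ C₂) : C₁ = C₂ := by
  by_contra hne
  exact h₁.1.not_indep (h₂.2 C₁ (ssubset_of_subset_of_ne hsub hne))

private lemma IsCircuit.diff_singleton_indep (hC : IsCircuit M C) (he : e ∈ C) :
    M.Indep (C \ {e}) :=
  hC.2 _ (sdiff_singleton_ssubset.2 he)

private lemma IsCircuit.mem_closure_diff_singleton (hC : IsCircuit M C) (he : e ∈ C) :
    e ∈ M.closure (C \ {e}) := by
  have hind := hC.diff_singleton_indep he
  have hdep : M.Dep (insert e (C \ {e})) := by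
    rw [insert_diff_singleton, insert_eq_of_mem he]; exact hC.1
  exact (hind.insert_dep_iff.1 hdep).1

/-- Strong circuit elimination. -/
private lemma strong_elimination {C₁ C₂ : Set α} (h₁ : IsCircuit M C₁) (h₂ : IsCircuit M C₂)
    (he : e ∈ C₁ ∩ C₂) (hf : f ∈ C₁ \ C₂) :
    ∃ C, IsCircuit M C ∧ f ∈ C ∧ C ⊆ (C₁ ∪ C₂) \ {e} := by
  classical
  set X : Set α := (C₁ ∪ C₂) \ {e, f} with hX_def
  have hXE : X ⊆ M.E := diff_subset.trans (union_subset h₁.subset_ground' h₂.subset_ground')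
  have hC2e : C₂ \ {e} ⊆ X := by
    intro x hx
    refine ⟨Or.inr hx.1, ?_⟩
    simp only [mem_insert_iff, mem_singleton_iff]
    rintro (rfl | rfl)
    · exact hx.2 rfl
    · exact hf.2 hx.1
  have hins : insert e X = (C₁ ∪ C₂) \ {f} := by
    rw [hX_def]
    ext x
    simp only [mem_insert_iff, mem_diff, mem_insert_iff, mem_singleton_iff]
    constructor
    · rintro (rfl | ⟨hx, hx2⟩)
      · exact ⟨Or.inl he.1, fun h => hf.2 (h ▸ he.2)⟩
      · exact ⟨hx, fun h => hx2 (Or.inr h)⟩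
    · rintro ⟨hx, hxf⟩
      by_cases hxe : x = e
      · exact Or.inl hxe
      · exact Or.inr ⟨hx, by tauto⟩
  have hecl : e ∈ M.closure X :=
    M.closure_subset_closure hC2e (h₂.mem_closure_diff_singleton he.2)
  have hfcl : f ∈ M.closure X := by
    have h1 : C₁ \ {f} ⊆ insert e X := by
      rw [hins]
      exact diff_subset_diff_left subset_union_left
    have := M.closure_subset_closure h1 (h₁.mem_closure_diff_singleton hf.1)
    rwa [closure_insert_eq_of_mem_closure hecl] at this
  obtain ⟨I, hI⟩ := M.exists_isBasis X hXE
  have hfI : f ∉ I := fun h => (hI.subset h).2 (Or.inr rfl)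
  have hfclI : f ∈ M.closure I := by rwa [hI.closure_eq_closure]
  obtain ⟨C, hC, hfC, hCsub⟩ := exists_circuit_insert hI.indep hfclI hfI
  refine ⟨C, hC, hfC, ?_⟩
  refine hCsub.trans ?_
  have : insert f X ⊆ (C₁ ∪ C₂) \ {e} := by
    rw [hX_def]
    rintro x (rfl | ⟨hx, hx2⟩)
    · exact ⟨Or.inl hf.1, fun h => hf.2 ((mem_singleton_iff.1 h) ▸ he.2)⟩
    · exact ⟨hx, fun h => hx2 (Or.inl (mem_singleton_iff.1 h))⟩
  exact (insert_subset_insert hI.subset).trans this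

/-- Weak circuit elimination. -/
private lemma weak_elimination {C₁ C₂ : Set α} (h₁ : IsCircuit M C₁) (h₂ : IsCircuit M C₂)
    (hne : C₁ ≠ C₂) (he : e ∈ C₁ ∩ C₂) :
    ∃ C, IsCircuit M C ∧ C ⊆ (C₁ ∪ C₂) \ {e} := by
  have hns : ¬ C₁ ⊆ C₂ := fun h => hne (h₁.eq_of_subset_circuit h₂ h)
  obtain ⟨x, hx1, hx2⟩ := not_subset.1 hns
  obtain ⟨C, hC, -, hsub⟩ := strong_elimination h₁ h₂ he ⟨hx1, hx2⟩
  exact ⟨C, hC, hsub⟩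

/-- Circuits of a restriction. -/
private lemma circuit_restrict_iff (hX : X ⊆ M.E) :
    IsCircuit (M ↾ X) C ↔ IsCircuit M C ∧ C ⊆ X := by
  constructor
  · rintro ⟨hdep, hmin⟩
    rw [restrict_dep_iff] at hdep
    refine ⟨⟨dep_of_not_indep hdep.1 (hdep.2.trans hX), fun D hD => ?_⟩, hdep.2⟩
    have := hmin D hD
    rw [restrict_indep_iff] at this
    exact this.1
  · rintro ⟨⟨hdep, hmin⟩, hCX⟩
    refine ⟨restrict_dep_iff.2 ⟨hdep.not_indep, hCX⟩, fun D hD => ?_⟩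
    exact restrict_indep_iff.2 ⟨hmin D hD, (hD.subset.trans hCX)⟩

private lemma del_ground' (M : Matroid α) (X : Set α) : (del M X).E = M.E \ X := rfl

private lemma con_ground' (M : Matroid α) (X : Set α) : (con M X).E = M.E \ X := rfl

/-- Independence in a single-element contraction. -/
private lemma con_singleton_indep_iff (hnl : M.Indep {f}) {I : Set α} :
    (con M {f}).Indep I ↔ I ⊆ M.E \ {f} ∧ M.Indep (insert f I) := by
  have hfE : f ∈ M.E := singleton_subset_iff.1 hnl.subset_ground
  obtain ⟨B', hB', hfB'⟩ := hnl.exists_isBase_superset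
  have hB0 : M✶.IsBase (M.E \ B') := hB'.compl_isBase_dual
  have hB0sub : M.E \ B' ⊆ M.E \ {f} :=
    diff_subset_diff_right (singleton_subset_iff.2 (hfB' rfl))
  have hXsub : M.E \ {f} ⊆ M✶.E := by rw [dual_ground]; exact diff_subset
  have hbase : ∀ B, (M✶ ↾ (M.E \ {f})).IsBase B ↔ (M✶.IsBase B ∧ B ⊆ M.E \ {f}) := by
    intro B
    rw [isBase_restrict_iff hXsub]
    constructor
    · intro hB
      refine ⟨hB.indep.isBase_of_ground_subset_closure ?_, hB.subset⟩
      rw [hB.closure_eq_closure, ← hB0.closure_eq]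
      exact M✶.closure_subset_closure hB0sub
    · rintro ⟨hB, hBsub⟩
      exact hB.indep.isBasis_of_subset_of_subset_closure hBsub
        (by rw [hB.closure_eq]; exact hXsub)
  have hcon : con M {f} = (M✶ ↾ (M.E \ {f}))✶ := rfl
  rw [hcon, dual_indep_iff_exists']
  simp only [restrict_ground_eq]
  constructor
  · rintro ⟨hIsub, B, hB, hdisj⟩
    rw [hbase] at hB
    obtain ⟨hBbase, hBsub⟩ := hB
    refine ⟨hIsub, ?_⟩
    have : M✶✶.Indep (insert f I) := by
      rw [dual_indep_iff_exists']
      refine ⟨?_, B, hBbase, ?_⟩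
      · rw [dual_ground]
        exact insert_subset hfE (hIsub.trans diff_subset)
      · rw [Set.disjoint_left]
        rintro x (rfl | hx) hxB
        · exact (hBsub hxB).2 rfl
        · exact (Set.disjoint_left.1 hdisj) hx hxB
    rwa [dual_dual] at this
  · rintro ⟨hIsub, hIndep⟩
    have : M✶✶.Indep (insert f I) := by rwa [dual_dual]
    rw [dual_indep_iff_exists'] at this
    obtain ⟨hsub', B, hB, hdisj⟩ := this
    have hfB : f ∉ B := fun h => (Set.disjoint_left.1 hdisj) (mem_insert _ _) h
    refine ⟨hIsub, B, (hbase B).2 ⟨hB, subset_diff_singleton hB.subset_ground hfB⟩, ?_⟩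
    exact hdisj.mono_left (subset_insert _ _)

private lemma con_singleton_dep_iff (hnl : M.Indep {f}) {D : Set α} :
    (con M {f}).Dep D ↔ D ⊆ M.E \ {f} ∧ M.Dep (insert f D) := by
  have hfE : f ∈ M.E := singleton_subset_iff.1 hnl.subset_ground
  rw [dep_iff, con_singleton_indep_iff hnl, con_ground']
  constructor
  · rintro ⟨hni, hsub⟩
    exact ⟨hsub, dep_of_not_indep (fun h => hni ⟨hsub, h⟩)
      (insert_subset hfE (hsub.trans diff_subset))⟩
  · rintro ⟨hsub, hdep⟩
    exact ⟨fun h => hdep.not_indep h.2, hsub⟩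

/-- A matroid splits as a disjoint sum if independence is determined separately. -/
private lemma eq_disjointSum_of_indep_split {A B : Set α} (hAB : M.E = A ∪ B)
    (hdj : Disjoint A B)
    (h : ∀ I, I ⊆ M.E → M.Indep (I ∩ A) → M.Indep (I ∩ B) → M.Indep I) :
    M = Matroid.disjointSum (M ↾ A) (M ↾ B)
      (by rw [restrict_ground_eq, restrict_ground_eq]; exact hdj) := by
  refine ext_indep ?_ ?_
  · rw [disjointSum_ground_eq, restrict_ground_eq, restrict_ground_eq]; exact hAB
  · intro I hIE
    rw [disjointSum_indep_iff, restrict_indep_iff, restrict_indep_iff,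
      restrict_ground_eq, restrict_ground_eq]
    constructor
    · intro hI
      exact ⟨⟨hI.subset inter_subset_left, inter_subset_right⟩,
        ⟨hI.subset inter_subset_left, inter_subset_right⟩, hAB ▸ hIE⟩
    · rintro ⟨⟨h1, -⟩, ⟨h2, -⟩, -⟩
      exact h I hIE h1 h2

private lemma eq_disjointSum_of_circuit_split {A B : Set α} (hAB : M.E = A ∪ B)
    (hdj : Disjoint A B) (h : ∀ C, IsCircuit M C → C ⊆ A ∨ C ⊆ B) :
    M = Matroid.disjointSum (M ↾ A) (M ↾ B)
      (by rw [restrict_ground_eq, restrict_ground_eq]; exact hdj) := by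
  refine eq_disjointSum_of_indep_split hAB hdj fun I hIE h1 h2 => ?_
  refine indep_of_forall_circuit hIE fun C hC hCI => ?_
  rcases h C hC with hCA | hCB
  · exact hC.1.not_indep (h1.subset (subset_inter hCI hCA))
  · exact hC.1.not_indep (h2.subset (subset_inter hCI hCB))

private lemma not_connected_of_eq_disjointSum {M N₁ N₂ : Matroid α} {hd : Disjoint N₁.E N₂.E}
    (h1 : N₁.E.Nonempty) (h2 : N₂.E.Nonempty) (heq : M = Matroid.disjointSum N₁ N₂ hd) :
    ¬ Connected M :=
  fun hc => hc.2 ⟨N₁, N₂, h1, h2, hd, heq⟩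

/-- In a nontrivial connected matroid, every element is a non-loop. -/
private lemma connected_nonloop (hconn : Connected M) (hnt : M.E.Nontrivial) (hf : f ∈ M.E) :
    M.Indep {f} := by
  by_contra hdep
  have hcirc : ∀ C, IsCircuit M C → C ⊆ {f} ∨ C ⊆ M.E \ {f} := by
    intro C hC
    by_cases hfC : f ∈ C
    · left
      rcases eq_or_ne ({f} : Set α) C with heq | hne
      · exact heq.symm.subset
      · exact absurd (hC.2 {f} (ssubset_of_subset_of_ne (singleton_subset_iff.2 hfC) hne)) hdep
    · exact Or.inr (subset_diff_singleton hC.subset_ground' hfC)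
  obtain ⟨x, hx, hxf⟩ := hnt.exists_ne f
  refine not_connected_of_eq_disjointSum (M := M) ?_ ?_
    (eq_disjointSum_of_circuit_split (A := {f}) (B := M.E \ {f})
      (union_diff_cancel (singleton_subset_iff.2 hf)).symm disjoint_sdiff_right hcirc) hconn
  · exact ⟨f, by rw [restrict_ground_eq]; exact rfl⟩
  · exact ⟨x, by rw [restrict_ground_eq]; exact ⟨hx, hxf⟩⟩

/-- In a nontrivial connected matroid, every element is a non-coloop. -/
private lemma connected_noncoloop (hconn : Connected M) (hnt : M.E.Nontrivial) (hf : f ∈ M.E) :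
    ∃ B, M.IsBase B ∧ f ∉ B := by
  by_contra h
  push_neg at h
  have hcirc : ∀ C, IsCircuit M C → C ⊆ M.E \ {f} ∨ C ⊆ {f} := by
    intro C hC
    left
    refine subset_diff_singleton hC.subset_ground' fun hfC => ?_
    obtain ⟨B, hB, hCB⟩ := (hC.diff_singleton_indep hfC).exists_isBase_superset
    have : C ⊆ B := by
      intro x hx
      rcases eq_or_ne x f with rfl | hxf
      · exact h B hB
      · exact hCB ⟨hx, hxf⟩
    exact hC.1.not_indep (hB.indep.subset this)
  obtain ⟨x, hx, hxf⟩ := hnt.exists_ne f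
  refine not_connected_of_eq_disjointSum (M := M) ?_ ?_
    (eq_disjointSum_of_circuit_split (A := M.E \ {f}) (B := {f})
      (by rw [union_comm, union_diff_cancel (singleton_subset_iff.2 hf)])
      disjoint_sdiff_left hcirc) hconn
  · exact ⟨x, by rw [restrict_ground_eq]; exact ⟨hx, hxf⟩⟩
  · exact ⟨f, by rw [restrict_ground_eq]; exact rfl⟩

private lemma circuit_diff_f_nonempty (hnl : M.Indep {f}) (hC : IsCircuit M C) (hfC : f ∈ C) :
    (C \ {f}).Nonempty := by
  rw [nonempty_iff_ne_empty]
  intro h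
  have hCf : C = {f} :=
    subset_antisymm (diff_eq_empty.1 h) (singleton_subset_iff.2 hfC)
  exact hC.1.not_indep (hCf ▸ hnl)

/-- A circuit through `f` lies on one side of the split of `M/f`. -/
private lemma circuit_f_split {A B : Set α} (hfE : f ∈ M.E)
    (hdepsplit : ∀ I, I ⊆ M.E \ {f} → M.Dep (insert f I) →
      M.Dep (insert f (I ∩ A)) ∨ M.Dep (insert f (I ∩ B)))
    {C : Set α} (hC : IsCircuit M C) (hfC : f ∈ C) :
    C ⊆ insert f A ∨ C ⊆ insert f B := by
  have hsub : C \ {f} ⊆ M.E \ {f} := diff_subset_diff_left hC.subset_ground'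
  have hdep : M.Dep (insert f (C \ {f})) := by
    rw [insert_diff_singleton, insert_eq_of_mem hfC]; exact hC.1
  have main : ∀ P : Set α, M.Dep (insert f ((C \ {f}) ∩ P)) → C ⊆ insert f P := by
    intro P h
    have hsS : insert f ((C \ {f}) ∩ P) ⊆ C :=
      insert_subset hfC (inter_subset_left.trans diff_subset)
    have heq : insert f ((C \ {f}) ∩ P) = C := by
      by_contra hne
      exact h.not_indep (hC.2 _ (ssubset_of_subset_of_ne hsS hne))
    intro x hx
    rw [← heq] at hx
    rcases hx with rfl | hx
    · exact mem_insert _ _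
    · exact mem_insert_of_mem _ hx.2
  rcases hdepsplit _ hsub hdep with h | h
  · exact Or.inl (main A h)
  · exact Or.inr (main B h)

/-- From a circuit through `f` on the `A`-side of `C`, produce one on the `B`-side. -/
private lemma key1 {A B : Set α} (hnl : M.Indep {f}) (hdj : Disjoint A B)
    (hsplitf : ∀ C, IsCircuit M C → f ∈ C → C ⊆ insert f A ∨ C ⊆ insert f B)
    {C D : Set α} (hC : IsCircuit M C) (hfC : f ∉ C) (hCB : (C ∩ B).Nonempty)
    (hD : IsCircuit M D) (hfD : f ∈ D) (hDA : D \ {f} ⊆ C ∩ A) :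
    ∃ D', IsCircuit M D' ∧ f ∈ D' ∧ D' \ {f} ⊆ C ∩ B := by
  obtain ⟨g, hgD⟩ := circuit_diff_f_nonempty hnl hD hfD
  have hgCA : g ∈ C ∩ A := hDA hgD
  obtain ⟨C', hC', hfC', hC'sub⟩ :=
    strong_elimination hD hC ⟨hgD.1, hgCA.1⟩ ⟨hfD, hfC⟩
  have hDinC : D ⊆ insert f C := by
    intro x hx
    rcases eq_or_ne x f with rfl | hxf
    · exact mem_insert _ _
    · exact mem_insert_of_mem _ (hDA ⟨hx, hxf⟩).1
  rcases hsplitf C' hC' hfC' with h | h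
  · exfalso
    have hC'ne : C' ≠ D := by
      intro he
      exact ((hC'sub (he ▸ hgD.1)).2 rfl)
    obtain ⟨C'', hC'', hC''sub⟩ := weak_elimination hC' hD hC'ne ⟨hfC', hfD⟩
    have hsub2 : (C' ∪ D) \ {f} ⊆ C ∩ A := by
      rintro x ⟨hx, hxf⟩
      have hxf' : x ≠ f := hxf
      rcases hx with hx | hx
      · have hxA : x ∈ A := by
          rcases h hx with rfl | h'
          · exact absurd rfl hxf'
          · exact h'
        have hxC : x ∈ C := by
          have h1 := (hC'sub hx).1
          rcases h1 with h1 | h1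
          · exact (hDA ⟨h1, hxf⟩).1
          · exact h1
        exact ⟨hxC, hxA⟩
      · exact hDA ⟨hx, hxf⟩
    have hCA_ind : M.Indep (C ∩ A) := by
      refine hC.2 _ (ssubset_of_subset_of_ne inter_subset_left fun heq => ?_)
      obtain ⟨b, hb⟩ := hCB
      have hbA : b ∈ C ∩ A := by rw [heq]; exact hb.1
      exact (Set.disjoint_left.1 hdj) hbA.2 hb.2
    exact hC''.1.not_indep (hCA_ind.subset (hC''sub.trans hsub2))
  · refine ⟨C', hC', hfC', ?_⟩
    rintro x ⟨hx, hxf⟩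
    have hxf' : x ≠ f := hxf
    have hxB : x ∈ B := by
      rcases h hx with rfl | h'
      · exact absurd rfl hxf'
      · exact h'
    have hxC : x ∈ C := by
      have h1 := (hC'sub hx).1
      rcases h1 with h1 | h1
      · exact absurd (hDA ⟨h1, hxf⟩).2 fun hA => (Set.disjoint_left.1 hdj) hA hxB
      · exact h1
    exact ⟨hxC, hxB⟩

/-- The squeeze argument: circuits through `f` on either side of a split circuit are
exactly the two halves. -/
private lemma squeeze_half {A B : Set α} (hnl : M.Indep {f}) (hfA : f ∉ A)
    (hdj : Disjoint A B) {C D₁ D₂ : Set α} (hC : IsCircuit M C) (hfC : f ∉ C)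
    (hD₁ : IsCircuit M D₁) (hf1 : f ∈ D₁) (h1 : D₁ \ {f} ⊆ C ∩ A)
    (hD₂ : IsCircuit M D₂) (hf2 : f ∈ D₂) (h2 : D₂ \ {f} ⊆ C ∩ B) :
    insert f (C ∩ A) = D₁ := by
  have hne12 : D₁ ≠ D₂ := by
    obtain ⟨x, hx⟩ := circuit_diff_f_nonempty hnl hD₁ hf1
    intro heq
    exact (Set.disjoint_left.1 hdj) (h1 hx).2 (h2 (heq ▸ hx)).2
  have hsubCA : C ∩ A ⊆ D₁ := by
    by_contra hns
    obtain ⟨g0, hg0CA, hg0D₁⟩ := not_subset.1 hns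
    have hg0f : g0 ≠ f := fun h => hfA (h ▸ hg0CA.2)
    have hg0D₂ : g0 ∉ D₂ := by
      intro h
      exact (Set.disjoint_left.1 hdj) hg0CA.2 (h2 ⟨h, hg0f⟩).2
    obtain ⟨C'', hC'', hsub⟩ := weak_elimination hD₁ hD₂ hne12 ⟨hf1, hf2⟩
    have hsub' : C'' ⊆ C \ {g0} := by
      intro x hx
      obtain ⟨hx', hxf⟩ := hsub hx
      refine ⟨?_, ?_⟩
      · rcases hx' with h | h
        · exact (h1 ⟨h, hxf⟩).1
        · exact (h2 ⟨h, hxf⟩).1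
      · rintro rfl
        rcases hx' with h | h
        · exact hg0D₁ h
        · exact hg0D₂ h
    exact hC''.1.not_indep ((hC.diff_singleton_indep hg0CA.1).subset hsub')
  have heq : C ∩ A = D₁ \ {f} := by
    refine subset_antisymm (fun x hx => ⟨hsubCA hx, fun h => hfC (h ▸ hx.1)⟩) h1
  rw [heq, insert_diff_singleton, insert_eq_of_mem hf1]

/-- The main circuit-splitting lemma: a circuit avoiding `f` meeting both sides splits
into two circuits through `f`. -/
private lemma key2 {A B : Set α} (hnl : M.Indep {f}) (hfA : f ∉ A) (hfB : f ∉ B)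
    (hdj : Disjoint A B)
    (hsplitf : ∀ C, IsCircuit M C → f ∈ C → C ⊆ insert f A ∨ C ⊆ insert f B)
    {C : Set α} (hC : IsCircuit M C) (hfC : f ∉ C)
    (hCA : (C ∩ A).Nonempty) (hCB : (C ∩ B).Nonempty)
    (hCdep : M.Dep (insert f (C ∩ A)) ∨ M.Dep (insert f (C ∩ B))) :
    IsCircuit M (insert f (C ∩ A)) ∧ IsCircuit M (insert f (C ∩ B)) := by
  have hsplitf' : ∀ C, IsCircuit M C → f ∈ C → C ⊆ insert f B ∨ C ⊆ insert f A :=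
    fun C h h' => (hsplitf C h h').symm
  have get_fcirc : ∀ P : Set α, P ⊆ C → M.Dep (insert f P) → M.Indep P →
      ∃ D, IsCircuit M D ∧ f ∈ D ∧ D \ {f} ⊆ P := by
    intro P hPC hdep hind
    obtain ⟨D, hD, hDsub⟩ := exists_circuit_of_dep hdep
    have hfD : f ∈ D := by
      by_contra hfD
      exact hD.1.not_indep (hind.subset fun x hx =>
        ((hDsub hx).resolve_left fun h => hfD (h ▸ hx)))
    exact ⟨D, hD, hfD, fun x hx => (hDsub hx.1).resolve_left hx.2⟩
  have hindA : M.Indep (C ∩ A) := by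
    refine hC.2 _ (ssubset_of_subset_of_ne inter_subset_left fun heq => ?_)
    obtain ⟨b, hb⟩ := hCB
    have hbA : b ∈ C ∩ A := by rw [heq]; exact hb.1
    exact (Set.disjoint_left.1 hdj) hbA.2 hb.2
  have hindB : M.Indep (C ∩ B) := by
    refine hC.2 _ (ssubset_of_subset_of_ne inter_subset_left fun heq => ?_)
    obtain ⟨b, hb⟩ := hCA
    have hbB : b ∈ C ∩ B := by rw [heq]; exact hb.1
    exact (Set.disjoint_left.1 hdj) hb.2 hbB.2
  have both : ∃ D₁ D₂, IsCircuit M D₁ ∧ f ∈ D₁ ∧ D₁ \ {f} ⊆ C ∩ A ∧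
      IsCircuit M D₂ ∧ f ∈ D₂ ∧ D₂ \ {f} ⊆ C ∩ B := by
    rcases hCdep with h | h
    · obtain ⟨D, hD, hfD, hDA⟩ := get_fcirc (C ∩ A) inter_subset_left h hindA
      obtain ⟨D', hD', hfD', hD'B⟩ := key1 hnl hdj hsplitf hC hfC hCB hD hfD hDA
      exact ⟨D, D', hD, hfD, hDA, hD', hfD', hD'B⟩
    · obtain ⟨D, hD, hfD, hDB⟩ := get_fcirc (C ∩ B) inter_subset_left h hindB
      obtain ⟨D', hD', hfD', hD'A⟩ := key1 hnl hdj.symm hsplitf' hC hfC hCA hD hfD hDB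
      exact ⟨D', D, hD', hfD', hD'A, hD, hfD, hDB⟩
  obtain ⟨D₁, D₂, hD₁, hf1, h1, hD₂, hf2, h2⟩ := both
  constructor
  · rw [squeeze_half hnl hfA hdj hC hfC hD₁ hf1 h1 hD₂ hf2 h2]
    exact hD₁
  · rw [squeeze_half hnl hfB hdj.symm hC hfC hD₂ hf2 h2 hD₁ hf1 h1]
    exact hD₂

/-- `f` is in the closure of each side of the split. -/
private lemma f_mem_closure_side (hconn : Connected M) (hfE : f ∈ M.E) (hnl : M.Indep {f})
    {A B : Set α} (hAne : A.Nonempty) (hAB : A ∪ B = M.E \ {f}) (hdj : Disjoint A B)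
    (hsplitf : ∀ C, IsCircuit M C → f ∈ C → C ⊆ insert f A ∨ C ⊆ insert f B)
    (hdepsplit : ∀ I, I ⊆ M.E \ {f} → M.Dep (insert f I) →
      M.Dep (insert f (I ∩ A)) ∨ M.Dep (insert f (I ∩ B))) :
    f ∈ M.closure A := by
  have hfA : f ∉ A := fun h => (hAB ▸ Or.inl h : f ∈ M.E \ {f}).2 rfl
  have hfB : f ∉ B := fun h => (hAB ▸ Or.inr h : f ∈ M.E \ {f}).2 rfl
  by_contra hfcl
  have hcirc : ∀ C, IsCircuit M C → C ⊆ insert f B ∨ C ⊆ A := by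
    intro C hC
    by_cases hfC : f ∈ C
    · rcases hsplitf C hC hfC with h | h
      · exfalso
        have hsub : C \ {f} ⊆ A := fun x hx => (h hx.1).resolve_left hx.2
        exact hfcl (M.closure_subset_closure hsub (hC.mem_closure_diff_singleton hfC))
      · exact Or.inl h
    · have hCsub : C ⊆ A ∪ B := by
        rw [hAB]
        exact subset_diff_singleton hC.subset_ground' hfC
      by_cases hCA : (C ∩ A).Nonempty
      · by_cases hCB : (C ∩ B).Nonempty
        · exfalso
          have hCdep := hdepsplit C (hAB ▸ hCsub)
            (hC.1.superset (subset_insert _ _) (insert_subset hfE hC.subset_ground'))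
          obtain ⟨h1, -⟩ := key2 hnl hfA hfB hdj hsplitf hC hfC hCA hCB hCdep
          have hsub : insert f (C ∩ A) \ {f} ⊆ A := by
            rw [insert_diff_self_of_notMem (fun h => hfC (inter_subset_left h))]
            exact inter_subset_right
          exact hfcl (M.closure_subset_closure hsub
            (h1.mem_closure_diff_singleton (mem_insert _ _)))
        · right
          intro x hx
          rcases hCsub hx with h | h
          · exact h
          · exact absurd ⟨hx, h⟩ (fun hmem => hCB ⟨x, hmem⟩)
      · left
        intro x hx
        rcases hCsub hx with h | h
        · exact absurd ⟨hx, h⟩ (fun hmem => hCA ⟨x, hmem⟩)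
        · exact mem_insert_of_mem _ h
  have hground : M.E = insert f B ∪ A := by
    rw [insert_union, union_comm B A, hAB, insert_diff_singleton, insert_eq_of_mem hfE]
  have hdj' : Disjoint (insert f B) A := by
    rw [Set.disjoint_left]
    rintro x (rfl | hx) hxA
    · exact hfA hxA
    · exact (Set.disjoint_left.1 hdj) hxA hx
  obtain ⟨a, ha⟩ := hAne
  exact not_connected_of_eq_disjointSum (M := M)
    ⟨f, by rw [restrict_ground_eq]; exact mem_insert _ _⟩
    ⟨a, by rw [restrict_ground_eq]; exact ha⟩
    (eq_disjointSum_of_circuit_split hground hdj' hcirc) hconn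

private lemma not_coloop_restrict (hfE : f ∈ M.E) {A : Set α} (hA : A ⊆ M.E) (hfA : f ∉ A)
    (hfcl : f ∈ M.closure A) : ¬ IsColoop (M ↾ (insert f A)) f := by
  obtain ⟨I, hI⟩ := M.exists_isBasis A hA
  have hfclI : f ∈ M.closure I := by rwa [hI.closure_eq_closure]
  have hbasis : M.IsBasis I (insert f A) :=
    hI.indep.isBasis_of_subset_of_subset_closure (hI.subset.trans (subset_insert _ _))
      (insert_subset hfclI hI.subset_closure)
  have hbase : (M ↾ insert f A).IsBase I := (isBase_restrict_iff (insert_subset hfE hA)).2 hbasis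
  intro hco
  exact hfA (hI.subset (hco.2 I hbase))

/-- The union of two circuits through `f` on opposite sides, minus `f`, is a circuit. -/
private lemma pconn_circuit (hnl : M.Indep {f}) (hfE : f ∈ M.E) {A B : Set α}
    (hdj : Disjoint A B) (hfA : f ∉ A) (hfB : f ∉ B)
    (hsplitf : ∀ C, IsCircuit M C → f ∈ C → C ⊆ insert f A ∨ C ⊆ insert f B)
    (hdepsplit : ∀ I, I ⊆ M.E \ {f} → M.Dep (insert f I) →
      M.Dep (insert f (I ∩ A)) ∨ M.Dep (insert f (I ∩ B)))
    {C₁ C₂ : Set α} (h1 : IsCircuit M C₁) (h2 : IsCircuit M C₂)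
    (hf1 : f ∈ C₁) (hf2 : f ∈ C₂) (hC1 : C₁ ⊆ insert f A) (hC2 : C₂ ⊆ insert f B) :
    IsCircuit M ((C₁ ∪ C₂) \ {f}) := by
  set C : Set α := (C₁ ∪ C₂) \ {f} with hC_def
  have hC1A : C₁ \ {f} ⊆ A := fun x hx => (hC1 hx.1).resolve_left hx.2
  have hC2B : C₂ \ {f} ⊆ B := fun x hx => (hC2 hx.1).resolve_left hx.2
  have hCA : C ∩ A = C₁ \ {f} := by
    ext x
    constructor
    · rintro ⟨⟨hx | hx, hxf⟩, hxA⟩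
      · exact ⟨hx, hxf⟩
      · exact absurd hxA fun h => (Set.disjoint_left.1 hdj) h (hC2B ⟨hx, hxf⟩)
    · intro hx
      exact ⟨⟨Or.inl hx.1, hx.2⟩, hC1A hx⟩
  have hCB : C ∩ B = C₂ \ {f} := by
    ext x
    constructor
    · rintro ⟨⟨hx | hx, hxf⟩, hxB⟩
      · exact absurd hxB fun h => (Set.disjoint_left.1 hdj) (hC1A ⟨hx, hxf⟩) h
      · exact ⟨hx, hxf⟩
    · intro hx
      exact ⟨⟨Or.inr hx.1, hx.2⟩, hC2B hx⟩
  have hfC : f ∉ C := fun h => h.2 rfl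
  have hCE : C ⊆ M.E := diff_subset.trans (union_subset h1.subset_ground' h2.subset_ground')
  have h1ne := circuit_diff_f_nonempty hnl h1 hf1
  have h2ne := circuit_diff_f_nonempty hnl h2 hf2
  have hCsubAB : C ⊆ A ∪ B := by
    rintro x ⟨hx | hx, hxf⟩
    · exact Or.inl (hC1A ⟨hx, hxf⟩)
    · exact Or.inr (hC2B ⟨hx, hxf⟩)
  -- C is dependent
  have hdepC : M.Dep C := by
    rw [dep_iff]
    refine ⟨fun hind => ?_, hCE⟩
    obtain ⟨x, hx⟩ := h1ne
    have hx1 : x ∈ C := ⟨Or.inl hx.1, hx.2⟩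
    have hfcl2 : f ∈ M.closure (C \ {x}) := by
      refine M.closure_subset_closure ?_ (h2.mem_closure_diff_singleton hf2)
      rintro y ⟨hy, hyf⟩
      refine ⟨⟨Or.inr hy, hyf⟩, ?_⟩
      rintro rfl
      exact (Set.disjoint_left.1 hdj) (hC1A hx) (hC2B ⟨hy, hyf⟩)
    have hxcl : x ∈ M.closure (C \ {x}) := by
      have h1' : x ∈ M.closure (C₁ \ {x}) := h1.mem_closure_diff_singleton hx.1
      have hsub : C₁ \ {x} ⊆ insert f (C \ {x}) := by
        rintro y ⟨hy, hyx⟩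
        rcases eq_or_ne y f with rfl | hyf
        · exact mem_insert _ _
        · exact mem_insert_of_mem _ ⟨⟨Or.inl hy, hyf⟩, hyx⟩
      have := M.closure_subset_closure hsub h1'
      rwa [closure_insert_eq_of_mem_closure hfcl2] at this
    exact (hind.notMem_closure_diff_of_mem hx1) hxcl
  refine ⟨hdepC, fun D hD => ?_⟩
  by_contra hnind
  obtain ⟨D', hD', hD'sub⟩ :=
    exists_circuit_of_dep (dep_of_not_indep hnind (hD.subset.trans hCE))
  have hD'C : D' ⊆ C := hD'sub.trans hD.subset
  have hfD' : f ∉ D' := fun h => hfC (hD'C h)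
  have hD'A : D' ∩ A ⊆ C₁ \ {f} := hCA ▸ inter_subset_inter_left A hD'C
  have hD'B : D' ∩ B ⊆ C₂ \ {f} := hCB ▸ inter_subset_inter_left B hD'C
  by_cases hA' : (D' ∩ A).Nonempty
  · by_cases hB' : (D' ∩ B).Nonempty
    · have hdepD' : M.Dep (insert f D') :=
        hD'.1.superset (subset_insert _ _) (insert_subset hfE hD'.subset_ground')
      obtain ⟨k1, k2⟩ := key2 hnl hfA hfB hdj hsplitf hD' hfD' hA' hB'
        (hdepsplit D' (subset_diff_singleton (hD'C.trans hCE) hfD') hdepD')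
      have he1 : insert f (D' ∩ A) = C₁ :=
        k1.eq_of_subset_circuit h1 (insert_subset hf1 (hD'A.trans diff_subset))
      have he2 : insert f (D' ∩ B) = C₂ :=
        k2.eq_of_subset_circuit h2 (insert_subset hf2 (hD'B.trans diff_subset))
      have hCD' : C ⊆ D' := by
        intro x hx
        rcases hCsubAB hx with h | h
        · have : x ∈ C₁ \ {f} := hCA ▸ (⟨hx, h⟩ : x ∈ C ∩ A)
          have : x ∈ insert f (D' ∩ A) := he1.symm ▸ this.1
          rcases this with rfl | hmem
          · exact absurd hx hfC
          · exact hmem.1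
        · have : x ∈ C₂ \ {f} := hCB ▸ (⟨hx, h⟩ : x ∈ C ∩ B)
          have : x ∈ insert f (D' ∩ B) := he2.symm ▸ this.1
          rcases this with rfl | hmem
          · exact absurd hx hfC
          · exact hmem.1
      exact hD.not_subset (hCD'.trans hD'sub)
    · have hsub : D' ⊆ C₁ \ {f} := by
        intro x hx
        rcases hCsubAB (hD'C hx) with h | h
        · exact hD'A ⟨hx, h⟩
        · exact absurd ⟨hx, h⟩ fun hmem => hB' ⟨x, hmem⟩
      exact hD'.1.not_indep ((h1.diff_singleton_indep hf1).subset hsub)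
  · have hsub : D' ⊆ C₂ \ {f} := by
      intro x hx
      rcases hCsubAB (hD'C hx) with h | h
      · exact absurd ⟨hx, h⟩ fun hmem => hA' ⟨x, hmem⟩
      · exact hD'B ⟨hx, h⟩
    exact hD'.1.not_indep ((h2.diff_singleton_indep hf2).subset hsub)

end Stmt8Aux

section
open Set Matroid

/-- a non-trivial connected matroid is parallel irreducible at `f` iff
`M/f` is connected. -/
theorem stmt8 (M : Matroid α) (f : α) (hf : f ∈ M.E)
    (hnt : M.E.Nontrivial) (hconn : Connected M) :
    ParallelIrreducibleAt M f ↔ Connected (con M {f}) := by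
  classical
  have hnl : M.Indep {f} := connected_nonloop hconn hnt hf
  constructor
  · -- irreducible → M/f connected
    intro hirr
    by_contra hncon
    have hirr' : ¬ ∃ M1 M2 : Matroid α, M1.E ∩ M2.E = {f} ∧ M1.E.Nontrivial ∧
        M2.E.Nontrivial ∧ IsParallelConn M M1 M2 f := by
      rcases hirr with h | h
      · exact absurd h hnt.not_subsingleton
      · exact h
    apply hirr'
    have hEne : (con M {f}).E.Nonempty := by
      rw [con_ground']
      obtain ⟨x, hx, hxf⟩ := hnt.exists_ne f
      exact ⟨x, hx, hxf⟩
    unfold Connected at hncon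
    rw [not_and_or, not_not] at hncon
    rcases hncon with h | h
    · exact absurd hEne h
    obtain ⟨N1, N2, hne1, hne2, hd, heq⟩ := h
    set A := N1.E with hA_def
    set B := N2.E with hB_def
    have hAB : A ∪ B = M.E \ {f} := by
      have hgr := congrArg Matroid.E heq
      rw [con_ground', disjointSum_ground_eq] at hgr
      exact hgr.symm
    have hAE : A ⊆ M.E \ {f} := hAB ▸ subset_union_left
    have hBE : B ⊆ M.E \ {f} := hAB ▸ subset_union_right
    have hAE' : A ⊆ M.E := hAE.trans diff_subset
    have hBE' : B ⊆ M.E := hBE.trans diff_subset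
    have hfA : f ∉ A := fun h => (hAE h).2 rfl
    have hfB : f ∉ B := fun h => (hBE h).2 rfl
    have hstar : ∀ I, I ⊆ M.E \ {f} → M.Indep (insert f (I ∩ A)) →
        M.Indep (insert f (I ∩ B)) → M.Indep (insert f I) := by
      intro I hI h1 h2
      have c1 : (con M {f}).Indep (I ∩ A) :=
        (con_singleton_indep_iff hnl).2 ⟨inter_subset_left.trans hI, h1⟩
      have c2 : (con M {f}).Indep (I ∩ B) :=
        (con_singleton_indep_iff hnl).2 ⟨inter_subset_left.trans hI, h2⟩
      rw [heq, disjointSum_indep_iff] at c1 c2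
      have hsum : (Matroid.disjointSum N1 N2 hd).Indep I := by
        rw [disjointSum_indep_iff]
        refine ⟨?_, ?_, ?_⟩
        · have := c1.1
          rwa [inter_assoc, inter_self] at this
        · have := c2.2.1
          rwa [inter_assoc, inter_self] at this
        · exact hAB ▸ hI
      rw [← heq] at hsum
      exact ((con_singleton_indep_iff hnl).1 hsum).2
    have hdepsplit : ∀ I, I ⊆ M.E \ {f} → M.Dep (insert f I) →
        M.Dep (insert f (I ∩ A)) ∨ M.Dep (insert f (I ∩ B)) := by
      intro I hI hdep
      by_contra hno
      push_neg at hno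
      have h1 : M.Indep (insert f (I ∩ A)) :=
        (not_dep_iff (insert_subset hf ((inter_subset_left.trans hI).trans diff_subset))).1
          hno.1
      have h2 : M.Indep (insert f (I ∩ B)) :=
        (not_dep_iff (insert_subset hf ((inter_subset_left.trans hI).trans diff_subset))).1
          hno.2
      exact hdep.not_indep (hstar I hI h1 h2)
    have hsplitf : ∀ C, IsCircuit M C → f ∈ C → C ⊆ insert f A ∨ C ⊆ insert f B :=
      fun C hC hfC => circuit_f_split hf hdepsplit hC hfC
    have hsplitf' : ∀ C, IsCircuit M C → f ∈ C → C ⊆ insert f B ∨ C ⊆ insert f A :=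
      fun C hC hfC => (hsplitf C hC hfC).symm
    have hdepsplit' : ∀ I, I ⊆ M.E \ {f} → M.Dep (insert f I) →
        M.Dep (insert f (I ∩ B)) ∨ M.Dep (insert f (I ∩ A)) :=
      fun I hI hdep => (hdepsplit I hI hdep).symm
    have hclA : f ∈ M.closure A :=
      f_mem_closure_side hconn hf hnl hne1 hAB hd hsplitf hdepsplit
    have hclB : f ∈ M.closure B :=
      f_mem_closure_side hconn hf hnl hne2 (by rw [union_comm]; exact hAB) hd.symm
        hsplitf' hdepsplit'
    have hE1 : insert f A ⊆ M.E := insert_subset hf hAE'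
    have hE2 : insert f B ⊆ M.E := insert_subset hf hBE'
    refine ⟨M ↾ (insert f A), M ↾ (insert f B), ?_, ?_, ?_, ?_⟩
    · rw [restrict_ground_eq, restrict_ground_eq]
      ext x
      simp only [mem_inter_iff, mem_insert_iff, mem_singleton_iff]
      constructor
      · rintro ⟨rfl | hxA, h2⟩
        · rfl
        · rcases h2 with rfl | hxB
          · rfl
          · exact absurd hxB ((Set.disjoint_left.1 hd) hxA)
      · rintro rfl
        exact ⟨Or.inl rfl, Or.inl rfl⟩
    · rw [restrict_ground_eq]
      obtain ⟨a, ha⟩ := hne1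
      exact ⟨f, mem_insert _ _, a, mem_insert_of_mem _ ha,
        fun h => hfA (by rw [h]; exact ha)⟩
    · rw [restrict_ground_eq]
      obtain ⟨b, hb⟩ := hne2
      exact ⟨f, mem_insert _ _, b, mem_insert_of_mem _ hb,
        fun h => hfB (by rw [h]; exact hb)⟩
    · have hnotloop1 : ¬ IsLoop (M ↾ insert f A) f := by
        rintro ⟨-, h2⟩
        exact h2 (restrict_indep_iff.2 ⟨hnl, singleton_subset_iff.2 (mem_insert _ _)⟩)
      have hnotloop2 : ¬ IsLoop (M ↾ insert f B) f := by
        rintro ⟨-, h2⟩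
        exact h2 (restrict_indep_iff.2 ⟨hnl, singleton_subset_iff.2 (mem_insert _ _)⟩)
      have hnotco1 : ¬ IsColoop (M ↾ insert f A) f :=
        not_coloop_restrict hf hAE' hfA hclA
      have hnotco2 : ¬ IsColoop (M ↾ insert f B) f :=
        not_coloop_restrict hf hBE' hfB hclB
      unfold IsParallelConn
      rw [if_neg hnotloop1, if_neg hnotco1, if_neg hnotloop2, if_neg hnotco2]
      constructor
      · have hg : insert f A ∪ insert f B = M.E := by
          ext x
          simp only [mem_union, mem_insert_iff]
          constructor
          · rintro ((rfl | hx) | (rfl | hx))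
            · exact hf
            · exact (hAE hx).1
            · exact hf
            · exact (hBE hx).1
          · intro hx
            rcases eq_or_ne x f with rfl | hxf
            · exact Or.inl (Or.inl rfl)
            · have hx' : x ∈ A ∪ B := hAB ▸ (⟨hx, hxf⟩ : x ∈ M.E \ {f})
              rcases hx' with h | h
              · exact Or.inl (Or.inr h)
              · exact Or.inr (Or.inr h)
        rw [restrict_ground_eq, restrict_ground_eq, hg]
      · intro C
        unfold PConnCircuit
        constructor
        · intro hC
          by_cases hfC : f ∈ C
          · rcases hsplitf C hC hfC with h | h
            · exact Or.inl ((circuit_restrict_iff hE1).2 ⟨hC, h⟩)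
            · exact Or.inr (Or.inl ((circuit_restrict_iff hE2).2 ⟨hC, h⟩))
          · have hCsub : C ⊆ A ∪ B := hAB ▸ subset_diff_singleton hC.subset_ground' hfC
            by_cases hCA : (C ∩ A).Nonempty
            · by_cases hCB' : (C ∩ B).Nonempty
              · obtain ⟨k1, k2⟩ := key2 hnl hfA hfB hd hsplitf hC hfC hCA hCB'
                  (hdepsplit C (subset_diff_singleton hC.subset_ground' hfC)
                    (hC.1.superset (subset_insert _ _)
                      (insert_subset hf hC.subset_ground')))
                refine Or.inr (Or.inr ⟨insert f (C ∩ A), insert f (C ∩ B), ?_, ?_,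
                  mem_insert _ _, mem_insert _ _, ?_⟩)
                · exact (circuit_restrict_iff hE1).2
                    ⟨k1, insert_subset_insert inter_subset_right⟩
                · exact (circuit_restrict_iff hE2).2
                    ⟨k2, insert_subset_insert inter_subset_right⟩
                · ext x
                  simp only [mem_diff, mem_union, mem_insert_iff, mem_inter_iff,
                    mem_singleton_iff]
                  constructor
                  · intro hx
                    refine ⟨?_, fun h => hfC (h ▸ hx)⟩
                    rcases hCsub hx with h | h
                    · exact Or.inl (Or.inr ⟨hx, h⟩)
                    · exact Or.inr (Or.inr ⟨hx, h⟩)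
                  · rintro ⟨(rfl | ⟨hx, -⟩) | (rfl | ⟨hx, -⟩), hxf⟩
                    · exact absurd rfl hxf
                    · exact hx
                    · exact absurd rfl hxf
                    · exact hx
              · refine Or.inl ((circuit_restrict_iff hE1).2 ⟨hC, fun x hx => ?_⟩)
                rcases hCsub hx with h | h
                · exact mem_insert_of_mem _ h
                · exact absurd ⟨hx, h⟩ fun hmem => hCB' ⟨x, hmem⟩
            · refine Or.inr (Or.inl ((circuit_restrict_iff hE2).2 ⟨hC, fun x hx => ?_⟩))
              rcases hCsub hx with h | h
              · exact absurd ⟨hx, h⟩ fun hmem => hCA ⟨x, hmem⟩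
              · exact mem_insert_of_mem _ h
        · intro h
          rcases h with h | h | ⟨C1, C2, h1, h2, hf1, hf2, heqC⟩
          · exact ((circuit_restrict_iff hE1).1 h).1
          · exact ((circuit_restrict_iff hE2).1 h).1
          · obtain ⟨h1', hC1sub⟩ := (circuit_restrict_iff hE1).1 h1
            obtain ⟨h2', hC2sub⟩ := (circuit_restrict_iff hE2).1 h2
            rw [heqC]
            exact pconn_circuit hnl hf hd hfA hfB hsplitf hdepsplit h1' h2' hf1 hf2
              hC1sub hC2sub
  · -- M/f connected → irreducible
    intro hcon
    right
    rintro ⟨M1, M2, hE12, hnt1, hnt2, hpc⟩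
    have hfM12 : f ∈ M1.E ∩ M2.E := by rw [hE12]; exact rfl
    unfold IsParallelConn at hpc
    split_ifs at hpc with hL1 hC1 hL2 hC2
    · obtain ⟨hd, heq⟩ := hpc
      refine absurd hconn (not_connected_of_eq_disjointSum hnt1.nonempty ?_ heq)
      rw [con_ground']
      obtain ⟨x, hx, hxf⟩ := hnt2.exists_ne f
      exact ⟨x, hx, hxf⟩
    · obtain ⟨hd, heq⟩ := hpc
      refine absurd hconn (not_connected_of_eq_disjointSum ?_ hnt2.nonempty heq)
      rw [del_ground']
      obtain ⟨x, hx, hxf⟩ := hnt1.exists_ne f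
      exact ⟨x, hx, hxf⟩
    · obtain ⟨hd, heq⟩ := hpc
      refine absurd hconn (not_connected_of_eq_disjointSum ?_ hnt2.nonempty heq)
      rw [con_ground']
      obtain ⟨x, hx, hxf⟩ := hnt1.exists_ne f
      exact ⟨x, hx, hxf⟩
    · obtain ⟨hd, heq⟩ := hpc
      refine absurd hconn (not_connected_of_eq_disjointSum hnt1.nonempty ?_ heq)
      rw [del_ground']
      obtain ⟨x, hx, hxf⟩ := hnt2.exists_ne f
      exact ⟨x, hx, hxf⟩
    · obtain ⟨hgr, hcirc⟩ := hpc
      set A := M1.E \ {f} with hA_def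
      set B := M2.E \ {f} with hB_def
      have hdj : Disjoint A B := by
        rw [Set.disjoint_left]
        rintro x ⟨hx1, hxf⟩ ⟨hx2, -⟩
        exact hxf (by have : x ∈ M1.E ∩ M2.E := ⟨hx1, hx2⟩; rwa [hE12] at this)
      have hgrc : (con M {f}).E = A ∪ B := by
        rw [con_ground', hgr, union_diff_distrib]
      have hindsplit : ∀ I, I ⊆ (con M {f}).E → (con M {f}).Indep (I ∩ A) →
          (con M {f}).Indep (I ∩ B) → (con M {f}).Indep I := by
        intro I hIE hi1 hi2
        rw [con_ground'] at hIE
        rw [con_singleton_indep_iff hnl] at hi1 hi2 ⊢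
        refine ⟨hIE, ?_⟩
        by_contra hnind
        have hdep : M.Dep (insert f I) :=
          dep_of_not_indep hnind (insert_subset hf (hIE.trans diff_subset))
        obtain ⟨K, hK, hKsub⟩ := exists_circuit_of_dep hdep
        have hKsplit := (hcirc K).1 hK
        unfold PConnCircuit at hKsplit
        have hcase : ∀ (N : Matroid α) (P : Set α), P = N.E \ {f} →
            M.Indep (insert f (I ∩ P)) → ∀ K', IsCircuit M K' → K' ⊆ N.E →
            K' ⊆ insert f I → False := by
          rintro N P rfl hind K' hK' hK'N hK'I
          have hsub : K' ⊆ insert f (I ∩ (N.E \ {f})) := by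
            intro x hx
            rcases eq_or_ne x f with rfl | hxf
            · exact mem_insert _ _
            · have hxI' : x ∈ I := (hK'I hx).resolve_left hxf
              exact mem_insert_of_mem _ ⟨hxI', hK'N hx, hxf⟩
          exact hK'.1.not_indep (hind.subset hsub)
        rcases hKsplit with h | h | ⟨C1, C2, hc1, hc2, hfc1, hfc2, hKeq⟩
        · exact hcase M1 A hA_def hi1.2 K ((hcirc K).2 (Or.inl h)) h.subset_ground'
            hKsub
        · exact hcase M2 B hB_def hi2.2 K ((hcirc K).2 (Or.inr (Or.inl h)))
            h.subset_ground' hKsub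
        · have hc1' : IsCircuit M C1 := (hcirc C1).2 (Or.inl hc1)
          have hC1I : C1 ⊆ insert f I := by
            intro x hx
            rcases eq_or_ne x f with rfl | hxf
            · exact mem_insert _ _
            · have : x ∈ K := by
                rw [hKeq]
                exact ⟨Or.inl hx, hxf⟩
              exact hKsub this
          exact hcase M1 A hA_def hi1.2 C1 hc1' hc1.subset_ground' hC1I
      have hsplit := eq_disjointSum_of_indep_split (M := con M {f}) hgrc hdj hindsplit
      refine absurd hcon (not_connected_of_eq_disjointSum ?_ ?_ hsplit)
      · rw [restrict_ground_eq]
        obtain ⟨x, hx, hxf⟩ := hnt1.exists_ne f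
        exact ⟨x, hx, hxf⟩
      · rw [restrict_ground_eq]
        obtain ⟨x, hx, hxf⟩ := hnt2.exists_ne f
        exact ⟨x, hx, hxf⟩

end

end

end SPPaper
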